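/- Let C be symmetric positive definite and B symmetric positive definite. Define Log_C(B) = (BC)^{1/2} + (CB)^{1/2} − 2C, where (BC)^{1/2} := C^{-1/2}(C^{1/2} B C^{1/2})^{1/2} C^{1/2} and (CB)^{1/2} := C^{1/2}(C^{1/2} B C^{1/2})^{1/2} C^{-1/2}. Then V = Log_C(B) is symmetric, I + L_C[V] is positive definite, and Exp_C(V) = (I + L_C[V]) C (I + L_C[V]) = B. -/

import Mathlib

open Matrix

open scoped ComplexOrder in
/-- The positive semidefinite square root, with its Mathlib (December 2024) definition. -/
noncomputable def Matrix.PosSemidef.sqrt {n 𝕜 : Type*} [Fintype n] [RCLike 𝕜] [DecidableEq n]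
    {A : Matrix n n 𝕜} (hA : A.PosSemidef) : Matrix n n 𝕜 :=
  hA.1.eigenvectorUnitary.1 * diagonal ((↑) ∘ Real.sqrt ∘ hA.1.eigenvalues) *
  (star hA.1.eigenvectorUnitary : Matrix n n 𝕜)

open scoped ComplexOrder in
lemma Matrix.PosSemidef.posSemidef_sqrt {n 𝕜 : Type*} [Fintype n] [RCLike 𝕜] [DecidableEq n]
    {A : Matrix n n 𝕜} (hA : A.PosSemidef) : hA.sqrt.PosSemidef := by
  have hD : (diagonal ((↑) ∘ Real.sqrt ∘ hA.1.eigenvalues) : Matrix n n 𝕜).PosSemidef :=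
    posSemidef_diagonal_iff.mpr (fun i => by simp [Real.sqrt_nonneg])
  have := hD.conjTranspose_mul_mul_same (star (hA.1.eigenvectorUnitary : Matrix n n 𝕜))
  simpa [Matrix.PosSemidef.sqrt, star_eq_conjTranspose, Matrix.mul_assoc] using this

/-- The matrix `A^{1/2} B A^{1/2}` is positive semidefinite. -/
lemma sandwich_psd {n : ℕ} {A B : Matrix (Fin n) (Fin n) ℝ} (hA : A.PosDef) (hB : B.PosSemidef) :
    (hA.posSemidef.sqrt * B * hA.posSemidef.sqrt).PosSemidef := by
  have h := hB.conjTranspose_mul_mul_same hA.posSemidef.sqrt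
  rwa [hA.posSemidef.posSemidef_sqrt.isHermitian.eq] at h

lemma Matrix.PosSemidef.sqrt_mul_self {n : ℕ} {A : Matrix (Fin n) (Fin n) ℝ}
    (hA : A.PosSemidef) : hA.sqrt * hA.sqrt = A := by
  have hs := hA.1.spectral_theorem
  simp only [Unitary.conjStarAlgAut_apply] at hs
  have hU : (star hA.1.eigenvectorUnitary : Matrix (Fin n) (Fin n) ℝ) *
      (hA.1.eigenvectorUnitary : Matrix (Fin n) (Fin n) ℝ) = 1 :=
    Unitary.coe_star_mul_self _
  unfold Matrix.PosSemidef.sqrt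
  simp only [Matrix.mul_assoc]
  rw [← Matrix.mul_assoc (star _ : Matrix (Fin n) (Fin n) ℝ) _ _, hU, Matrix.one_mul,
    ← Matrix.mul_assoc (diagonal _) (diagonal _), diagonal_mul_diagonal]
  conv_rhs => rw [hs]
  rw [Matrix.mul_assoc]
  congr 3
  ext i
  simp [Real.mul_self_sqrt (hA.eigenvalues_nonneg i)]

lemma posDef_of_psd_unit {n : ℕ} {A : Matrix (Fin n) (Fin n) ℝ}
    (hA : A.PosSemidef) (h : IsUnit A.det) : A.PosDef := by
  exact hA.posDef_iff_isUnit.mpr ((Matrix.isUnit_iff_isUnit_det A).mpr h)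

lemma eq_zero_of_trace_transpose_mul_self {n : ℕ} {A : Matrix (Fin n) (Fin n) ℝ}
    (h : (Aᵀ * A).trace = 0) : A = 0 := by
  have h' : ∀ j ∈ Finset.univ, (0:ℝ) ≤ (Aᵀ * A) j j := fun j _ => by
    simp only [Matrix.mul_apply, Matrix.transpose_apply]
    exact Finset.sum_nonneg fun i _ => mul_self_nonneg _
  rw [Matrix.trace] at h
  have hz := (Finset.sum_eq_zero_iff_of_nonneg h').mp h
  ext i j
  have hjj := hz j (Finset.mem_univ j)
  simp only [Matrix.diag_apply, Matrix.mul_apply, Matrix.transpose_apply] at hjj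
  have := (Finset.sum_eq_zero_iff_of_nonneg
    (fun i _ => mul_self_nonneg (A i j))).mp hjj i (Finset.mem_univ i)
  simpa [mul_self_eq_zero] using this


/-- `V = Log_C(B) = (BC)^{1/2} + (CB)^{1/2} − 2C` is symmetric, `I + L_C[V]` is
positive definite, and `Exp_C(V) = (I + L_C[V]) C (I + L_C[V]) = B`. -/
theorem riemannian_log {n : ℕ} {C B : Matrix (Fin n) (Fin n) ℝ}
    (hC : C.PosDef) (hB : B.PosDef) :
    ((hC.posSemidef.sqrt)⁻¹ * (sandwich_psd hC hB.posSemidef).sqrt * hC.posSemidef.sqrt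
      + hC.posSemidef.sqrt * (sandwich_psd hC hB.posSemidef).sqrt * (hC.posSemidef.sqrt)⁻¹
      - 2 • C).IsSymm ∧
    ∀ X : Matrix (Fin n) (Fin n) ℝ, X.IsSymm →
      X * C + C * X
        = (hC.posSemidef.sqrt)⁻¹ * (sandwich_psd hC hB.posSemidef).sqrt * hC.posSemidef.sqrt
          + hC.posSemidef.sqrt * (sandwich_psd hC hB.posSemidef).sqrt * (hC.posSemidef.sqrt)⁻¹
          - 2 • C →
      ((1 : Matrix (Fin n) (Fin n) ℝ) + X).PosDef ∧ (1 + X) * C * (1 + X) = B := by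
  set S := hC.posSemidef.sqrt with hSdef
  set M := (sandwich_psd hC hB.posSemidef).sqrt with hMdef
  have hSS : S * S = C := hC.posSemidef.sqrt_mul_self
  have hMM : M * M = S * B * S := (sandwich_psd hC hB.posSemidef).sqrt_mul_self
  have hSsym : Sᵀ = S := by
    have h := hC.posSemidef.posSemidef_sqrt.isHermitian
    rwa [Matrix.IsHermitian, conjTranspose_eq_transpose_of_trivial] at h
  have hMsym : Mᵀ = M := by
    have h := (sandwich_psd hC hB.posSemidef).posSemidef_sqrt.isHermitian
    rwa [Matrix.IsHermitian, conjTranspose_eq_transpose_of_trivial] at h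
  have hCsym : Cᵀ = C := by
    have h := hC.isHermitian
    rwa [Matrix.IsHermitian, conjTranspose_eq_transpose_of_trivial] at h
  have hCdet : IsUnit C.det := isUnit_iff_ne_zero.mpr hC.det_pos.ne'
  have hSdet : IsUnit S.det := by
    have h : S.det * S.det = C.det := by rw [← Matrix.det_mul, hSS]
    exact isUnit_of_mul_isUnit_left (h ▸ hCdet)
  have hBdet : IsUnit B.det := isUnit_iff_ne_zero.mpr hB.det_pos.ne'
  have hMdet : IsUnit M.det := by
    have h : M.det * M.det = S.det * B.det * S.det := by
      rw [← Matrix.det_mul, hMM, Matrix.det_mul, Matrix.det_mul]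
    exact isUnit_of_mul_isUnit_left (h ▸ ((hSdet.mul hBdet).mul hSdet))
  have hSiT : (S⁻¹)ᵀ = S⁻¹ := by rw [Matrix.transpose_nonsing_inv, hSsym]
  have cancel1 : ∀ A : Matrix (Fin n) (Fin n) ℝ, S⁻¹ * (S * A) = A := fun A => by
    rw [← Matrix.mul_assoc, Matrix.nonsing_inv_mul _ hSdet, Matrix.one_mul]
  have cancel2 : ∀ A : Matrix (Fin n) (Fin n) ℝ, S * (S⁻¹ * A) = A := fun A => by
    rw [← Matrix.mul_assoc, Matrix.mul_nonsing_inv _ hSdet, Matrix.one_mul]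
  constructor
  · show (S⁻¹ * M * S + S * M * S⁻¹ - 2 • C)ᵀ = _
    simp only [Matrix.transpose_sub, Matrix.transpose_add, Matrix.transpose_mul,
      Matrix.transpose_smul, hSsym, hMsym, hSiT, hCsym, Matrix.mul_assoc]
    rw [add_comm]
  · intro X hX hXeq
    have hYeq : (S⁻¹ * M * S⁻¹ - 1) * C + C * (S⁻¹ * M * S⁻¹ - 1)
        = S⁻¹ * M * S + S * M * S⁻¹ - 2 • C := by
      rw [← hSS]
      simp only [Matrix.sub_mul, Matrix.mul_sub, Matrix.one_mul, Matrix.mul_one, two_smul,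
        Matrix.mul_assoc, cancel1, cancel2]
      abel
    have hYsym : (S⁻¹ * M * S⁻¹ - 1)ᵀ = S⁻¹ * M * S⁻¹ - 1 := by
      simp only [Matrix.transpose_sub, Matrix.transpose_mul, Matrix.transpose_one,
        hSiT, hMsym, Matrix.mul_assoc]
    set Y := S⁻¹ * M * S⁻¹ - 1 with hY
    have hD : (X - Y) * C + C * (X - Y) = 0 := by
      have h := hXeq.trans hYeq.symm
      simp only [Matrix.sub_mul, Matrix.mul_sub]
      rw [sub_add_sub_comm, h, sub_self]
    set D := X - Y with hDdef
    have hDsym : Dᵀ = D := by rw [hDdef, Matrix.transpose_sub, hX, hYsym]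
    have htr0 : (D * D * C).trace = 0 := by
      have h1 : (D * (D * C + C * D)).trace = 0 := by
        rw [hD, Matrix.mul_zero, Matrix.trace_zero]
      rw [Matrix.mul_add, Matrix.trace_add, ← Matrix.mul_assoc, ← Matrix.mul_assoc,
        Matrix.trace_mul_cycle D C D] at h1
      linarith
    have hDS : D * S = 0 := by
      apply eq_zero_of_trace_transpose_mul_self
      have : ((D * S)ᵀ * (D * S)).trace = (D * D * C).trace := by
        rw [Matrix.transpose_mul, hSsym, hDsym, Matrix.mul_assoc S D (D * S),
          Matrix.trace_mul_comm, ← hSS]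
        simp only [Matrix.mul_assoc]
      rw [this, htr0]
    have hD0 : D = 0 := by
      have h := congrArg (fun A => A * S⁻¹) hDS
      simpa [Matrix.mul_assoc, Matrix.mul_nonsing_inv _ hSdet] using h
    have hXY : X = Y := by
      have := sub_eq_zero.mp (hDdef ▸ hD0)
      exact this
    have h1X : (1 : Matrix (Fin n) (Fin n) ℝ) + X = S⁻¹ * M * S⁻¹ := by
      rw [hXY, hY]; abel
    constructor
    · rw [h1X]
      have hpsd : (S⁻¹ * M * (S⁻¹)ᴴ).PosSemidef :=
        (sandwich_psd hC hB.posSemidef).posSemidef_sqrt.mul_mul_conjTranspose_same S⁻¹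
      rw [conjTranspose_eq_transpose_of_trivial, hSiT] at hpsd
      apply posDef_of_psd_unit hpsd
      have hSidet : IsUnit S⁻¹.det := by
        rw [Matrix.det_nonsing_inv, Ring.inverse_eq_inv]
        exact isUnit_iff_ne_zero.mpr (inv_ne_zero (isUnit_iff_ne_zero.mp hSdet))
      rw [Matrix.det_mul, Matrix.det_mul]
      exact (hSidet.mul hMdet).mul hSidet
    · rw [h1X, ← hSS]
      calc S⁻¹ * M * S⁻¹ * (S * S) * (S⁻¹ * M * S⁻¹)
          = S⁻¹ * (M * M) * S⁻¹ := by
            simp only [Matrix.mul_assoc, cancel1, cancel2]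
        _ = B := by
            rw [hMM]
            simp only [Matrix.mul_assoc, cancel1, cancel2,
              Matrix.mul_nonsing_inv _ hSdet, Matrix.mul_one]
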